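/- For M > 0 define A(M) = ∫₀^M dt/√((M² − t²)((M+1)² − t²)) and B(M) = ∫_M^{M+1} dt/√((t² − M²)((M+1)² − t²)) (both integrals are finite and positive). Then there exist positive constants c and C, independent of M, such that for all M ≥ 1/2: c·log(1 + M) ≤ A(M)/B(M) ≤ C·log(1 + M). -/

import Mathlib

set_option maxHeartbeats 1000000

open Real MeasureTheory

/-- `A(M) = ∫₀^M dt/√((M² − t²)((M+1)² − t²))`. -/
noncomputable def ellipticA (M : ℝ) : ℝ :=
  ∫ t in Set.Ioo (0 : ℝ) M,
    1 / Real.sqrt ((M ^ 2 - t ^ 2) * ((M + 1) ^ 2 - t ^ 2))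

/-- `B(M) = ∫_M^{M+1} dt/√((t² − M²)((M+1)² − t²))`. -/
noncomputable def ellipticB (M : ℝ) : ℝ :=
  ∫ t in Set.Ioo M (M + 1),
    1 / Real.sqrt ((t ^ 2 - M ^ 2) * ((M + 1) ^ 2 - t ^ 2))

section Aux
open Set

private lemma ftc_open {a b : ℝ} (hab : a ≤ b) {g g' : ℝ → ℝ}
    (hcont : ContinuousOn g (Icc a b))
    (hderiv : ∀ x ∈ Ioo a b, HasDerivAt g (g' x) x)
    (hpos : ∀ x ∈ Ioo a b, 0 ≤ g' x) :
    IntegrableOn g' (Ioo a b) ∧ ∫ x in Ioo a b, g' x = g b - g a := by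
  have hIoc : IntegrableOn g' (Ioc a b) :=
    intervalIntegral.integrableOn_deriv_of_nonneg hcont hderiv hpos
  refine ⟨hIoc.mono_set Ioo_subset_Ioc_self, ?_⟩
  rw [← integral_Ioc_eq_integral_Ioo, ← intervalIntegral.integral_of_le hab]
  exact intervalIntegral.integral_eq_sub_of_hasDeriv_right_of_le hab hcont
    (fun x hx => (hderiv x hx).hasDerivWithinAt)
    ((intervalIntegrable_iff_integrableOn_Ioc_of_le hab).2 hIoc)

private lemma aux_half {M u v : ℝ} (hM : 0 < M) (hu : 0 < u) (hv : 1/2 ≤ v) :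
    1 / (2 * M * (Real.sqrt u * Real.sqrt v)) ≤ Real.sqrt 2 / (2 * M) * (1 / Real.sqrt u) := by
  have hv0 : (0:ℝ) < v := by linarith
  have hsu : (0:ℝ) < Real.sqrt u := Real.sqrt_pos.2 hu
  have hsv : (0:ℝ) < Real.sqrt v := Real.sqrt_pos.2 hv0
  have h2v : (1:ℝ) ≤ Real.sqrt 2 * Real.sqrt v := by
    rw [← Real.sqrt_mul (by norm_num)]
    have := Real.sqrt_le_sqrt (show (1:ℝ) ≤ 2 * v by linarith)
    rwa [Real.sqrt_one] at this
  have e : Real.sqrt 2 / (2 * M) * (1 / Real.sqrt u)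
      = (Real.sqrt 2 * Real.sqrt v) / (2 * M * (Real.sqrt u * Real.sqrt v)) := by
    field_simp
  rw [e]
  exact (div_le_div_iff_of_pos_right (by positivity)).2 h2v

private lemma ellipticA_bounds {M : ℝ} (hM : (1/2 : ℝ) ≤ M) :
    Real.log (1 + M) / (2 * (M + 1)) ≤ ellipticA M ∧
    ellipticA M ≤ 4 * Real.log (1 + Real.sqrt M) / M := by
  have hM0 : (0:ℝ) < M := by linarith
  set f : ℝ → ℝ := fun t => 1 / Real.sqrt ((M ^ 2 - t ^ 2) * ((M + 1) ^ 2 - t ^ 2)) with hf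
  -- majorant
  set g : ℝ → ℝ := fun t => 2 / (M * (Real.sqrt (M - t) * (1 + Real.sqrt (M - t)))) with hg
  have hgderiv : ∀ x ∈ Ioo (0:ℝ) M,
      HasDerivAt (fun t => -(4 / M) * Real.log (1 + Real.sqrt (M - t))) (g x) x := by
    intro x hx
    have h1 : (0:ℝ) < M - x := by linarith [hx.2]
    have hs : (0:ℝ) < Real.sqrt (M - x) := Real.sqrt_pos.2 h1
    have d1 : HasDerivAt (fun t : ℝ => M - t) (-1) x := by
      simpa using (hasDerivAt_id x).const_sub M
    have d2 : HasDerivAt (fun t : ℝ => Real.sqrt (M - t)) (-1 / (2 * Real.sqrt (M - x))) x :=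
      d1.sqrt h1.ne'
    have d3 : HasDerivAt (fun t : ℝ => 1 + Real.sqrt (M - t)) (-1 / (2 * Real.sqrt (M - x))) x :=
      d2.const_add 1
    have d4 : HasDerivAt (fun t : ℝ => Real.log (1 + Real.sqrt (M - t)))
        ((-1 / (2 * Real.sqrt (M - x))) / (1 + Real.sqrt (M - x))) x :=
      d3.log (by positivity)
    have := d4.const_mul (-(4 / M))
    convert this using 1
    · rfl
    · rfl
    rw [hg]
    field_simp
    ring
  have hgpos : ∀ x ∈ Ioo (0:ℝ) M, 0 ≤ g x := by
    intro x hx; rw [hg]; positivity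
  have hgcont : ContinuousOn (fun t => -(4 / M) * Real.log (1 + Real.sqrt (M - t))) (Icc 0 M) := by
    apply continuousOn_const.mul
    apply ContinuousOn.log
    · exact (continuous_const.add ((continuous_const.sub continuous_id).sqrt)).continuousOn
    · intro x hx
      have := Real.sqrt_nonneg (M - x)
      positivity
  obtain ⟨hgInt, hgVal⟩ := ftc_open hM0.le hgcont hgderiv hgpos
  have hgVal' : ∫ x in Ioo (0:ℝ) M, g x = 4 * Real.log (1 + Real.sqrt M) / M := by
    rw [hgVal]; simp [Real.log_one]; ring
  -- pointwise bound f ≤ g on Ioo 0 M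
  have hfg : ∀ x ∈ Ioo (0:ℝ) M, f x ≤ g x := by
    intro x hx
    obtain ⟨hx0, hxM⟩ := hx
    have h1 : (0:ℝ) < M - x := by linarith
    have h2 : (1:ℝ) ≤ M + 1 - x := by linarith
    have hs : (0:ℝ) < Real.sqrt (M - x) := Real.sqrt_pos.2 h1
    -- sqrt(M+1-x) ≥ (1 + sqrt(M-x))/2
    have e1 : (1 + Real.sqrt (M - x)) / 2 ≤ Real.sqrt (M + 1 - x) := by
      have i1 : (1:ℝ) ≤ Real.sqrt (M + 1 - x) := by
        have := Real.sqrt_le_sqrt h2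
        rwa [Real.sqrt_one] at this
      have i2 : Real.sqrt (M - x) ≤ Real.sqrt (M + 1 - x) := Real.sqrt_le_sqrt (by linarith)
      linarith
    have e2 : Real.sqrt (M - x) * Real.sqrt (M + 1 - x) = Real.sqrt ((M - x) * (M + 1 - x)) :=
      (Real.sqrt_mul h1.le _).symm
    have e3 : M * Real.sqrt ((M - x) * (M + 1 - x)) = Real.sqrt (M^2 * ((M - x) * (M + 1 - x))) := by
      rw [Real.sqrt_mul (sq_nonneg M), Real.sqrt_sq hM0.le]
    have e4 : M^2 * ((M - x) * (M + 1 - x)) ≤ (M ^ 2 - x ^ 2) * ((M + 1) ^ 2 - x ^ 2) := by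
      nlinarith [mul_nonneg h1.le (by linarith : (0:ℝ) ≤ M + 1 - x), hx0.le, hM0.le,
        mul_nonneg (mul_nonneg h1.le (by linarith : (0:ℝ) ≤ M + 1 - x)) hx0.le]
    have key : M * (Real.sqrt (M - x) * (1 + Real.sqrt (M - x))) / 2
        ≤ Real.sqrt ((M ^ 2 - x ^ 2) * ((M + 1) ^ 2 - x ^ 2)) := by
      have c1 : Real.sqrt (M - x) * (1 + Real.sqrt (M - x)) / 2
          ≤ Real.sqrt (M - x) * Real.sqrt (M + 1 - x) := by
        have := mul_le_mul_of_nonneg_left e1 hs.le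
        calc Real.sqrt (M - x) * (1 + Real.sqrt (M - x)) / 2
            = Real.sqrt (M - x) * ((1 + Real.sqrt (M - x)) / 2) := by ring
          _ ≤ Real.sqrt (M - x) * Real.sqrt (M + 1 - x) := this
      calc M * (Real.sqrt (M - x) * (1 + Real.sqrt (M - x))) / 2
          ≤ M * (Real.sqrt (M - x) * Real.sqrt (M + 1 - x)) := by
            rw [mul_div_assoc]
            exact mul_le_mul_of_nonneg_left c1 hM0.le
        _ = Real.sqrt (M^2 * ((M - x) * (M + 1 - x))) := by rw [e2, e3]
        _ ≤ Real.sqrt ((M ^ 2 - x ^ 2) * ((M + 1) ^ 2 - x ^ 2)) := Real.sqrt_le_sqrt e4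
    have hden : (0:ℝ) < M * (Real.sqrt (M - x) * (1 + Real.sqrt (M - x))) / 2 := by positivity
    have := one_div_le_one_div_of_le hden key
    calc f x ≤ 1 / (M * (Real.sqrt (M - x) * (1 + Real.sqrt (M - x))) / 2) := this
      _ = g x := by rw [hg, one_div_div]
  -- integrability and measurability of f
  have hfcont : ContinuousOn f (Ioo (0:ℝ) M) := by
    apply ContinuousOn.div continuousOn_const
    · exact (Real.continuous_sqrt.comp (by continuity)).continuousOn
    · intro x hx
      obtain ⟨hx0, hxM⟩ := hx
      have : (0:ℝ) < (M ^ 2 - x ^ 2) * ((M + 1) ^ 2 - x ^ 2) := by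
        nlinarith [mul_pos (show (0:ℝ) < M - x by linarith) (show (0:ℝ) < M + x by linarith),
          mul_pos (show (0:ℝ) < M + 1 - x by linarith) (show (0:ℝ) < M + 1 + x by linarith)]
      exact (Real.sqrt_pos.2 this).ne'
  have hfnonneg : ∀ x, 0 ≤ f x := fun x => by rw [hf]; positivity
  have hfInt : IntegrableOn f (Ioo (0:ℝ) M) := by
    apply hgInt.mono' (hfcont.aestronglyMeasurable measurableSet_Ioo)
    refine (ae_restrict_iff' measurableSet_Ioo).2 (Filter.Eventually.of_forall fun x hx => ?_)
    rw [Real.norm_of_nonneg (hfnonneg x)]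
    exact hfg x hx
  constructor
  · -- lower bound
    set φ : ℝ → ℝ := fun t => 1 / (2 * (M + 1)) * (1 / (M + 1 - t)) with hφ
    have hφderiv : ∀ x ∈ Ioo (0:ℝ) M,
        HasDerivAt (fun t => -(1 / (2 * (M + 1))) * Real.log (M + 1 - t)) (φ x) x := by
      intro x hx
      have h2 : (0:ℝ) < M + 1 - x := by linarith [hx.2]
      have d1 : HasDerivAt (fun t : ℝ => M + 1 - t) (-1) x := by
        simpa using (hasDerivAt_id x).const_sub (M + 1)
      have d2 := (d1.log h2.ne').const_mul (-(1 / (2 * (M + 1))))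
      convert d2 using 1
      · rfl
      · rfl
      rw [hφ]; field_simp
    have hφpos : ∀ x ∈ Ioo (0:ℝ) M, 0 ≤ φ x := by
      intro x hx
      have h2 : (0:ℝ) < M + 1 - x := by linarith [hx.2]
      rw [hφ]; positivity
    have hφcont : ContinuousOn (fun t => -(1 / (2 * (M + 1))) * Real.log (M + 1 - t)) (Icc 0 M) := by
      apply continuousOn_const.mul
      apply ContinuousOn.log
      · exact (continuous_const.sub continuous_id).continuousOn
      · intro x hx
        have := hx.2
        simp only [mem_Icc] at hx
        have : (0:ℝ) < M + 1 - x := by linarith [hx.2]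
        exact this.ne'
    obtain ⟨hφInt, hφVal⟩ := ftc_open hM0.le hφcont hφderiv hφpos
    have hφVal' : ∫ x in Ioo (0:ℝ) M, φ x = Real.log (1 + M) / (2 * (M + 1)) := by
      rw [hφVal, show M + 1 - M = 1 by ring, show M + 1 - 0 = 1 + M by ring,
        Real.log_one]
      ring
    have hφf : ∀ x ∈ Ioo (0:ℝ) M, φ x ≤ f x := by
      intro x hx
      obtain ⟨hx0, hxM⟩ := hx
      have h2 : (0:ℝ) < M + 1 - x := by linarith
      have hp : (0:ℝ) < (M ^ 2 - x ^ 2) * ((M + 1) ^ 2 - x ^ 2) := by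
        nlinarith [mul_pos (show (0:ℝ) < M - x by linarith) (show (0:ℝ) < M + x by linarith),
          mul_pos (show (0:ℝ) < M + 1 - x by linarith) (show (0:ℝ) < M + 1 + x by linarith)]
      have key : Real.sqrt ((M ^ 2 - x ^ 2) * ((M + 1) ^ 2 - x ^ 2))
          ≤ (M + 1 - x) * (2 * (M + 1)) := by
        have b1 : M ^ 2 - x ^ 2 ≤ (M + 1 - x) * (2 * (M + 1)) := by
          nlinarith [sq_nonneg (x - (M + 1))]
        have b2 : (M + 1) ^ 2 - x ^ 2 ≤ (M + 1 - x) * (2 * (M + 1)) := by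
          nlinarith [sq_nonneg (M + 1 - x)]
        have e1 : (M ^ 2 - x ^ 2) * ((M + 1) ^ 2 - x ^ 2) ≤ ((M + 1 - x) * (2 * (M + 1)))^2 := by
          have hb : (0:ℝ) ≤ (M + 1) ^ 2 - x ^ 2 := by nlinarith
          have := mul_le_mul b1 b2 hb (by positivity)
          nlinarith [this]
        calc Real.sqrt ((M ^ 2 - x ^ 2) * ((M + 1) ^ 2 - x ^ 2))
            ≤ Real.sqrt (((M + 1 - x) * (2 * (M + 1)))^2) := Real.sqrt_le_sqrt e1
          _ = (M + 1 - x) * (2 * (M + 1)) := Real.sqrt_sq (by positivity)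
      have hden : (0:ℝ) < Real.sqrt ((M ^ 2 - x ^ 2) * ((M + 1) ^ 2 - x ^ 2)) :=
        Real.sqrt_pos.2 hp
      have := one_div_le_one_div_of_le hden key
      calc φ x = 1 / ((M + 1 - x) * (2 * (M + 1))) := by
            show 1 / (2 * (M + 1)) * (1 / (M + 1 - x)) = 1 / ((M + 1 - x) * (2 * (M + 1)))
            rw [one_div_mul_one_div, mul_comm]
        _ ≤ f x := this
    calc Real.log (1 + M) / (2 * (M + 1)) = ∫ x in Ioo (0:ℝ) M, φ x := hφVal'.symm
      _ ≤ ∫ x in Ioo (0:ℝ) M, f x := setIntegral_mono_on hφInt hfInt measurableSet_Ioo hφf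
      _ = ellipticA M := rfl
  · calc ellipticA M = ∫ x in Ioo (0:ℝ) M, f x := rfl
      _ ≤ ∫ x in Ioo (0:ℝ) M, g x := setIntegral_mono_on hfInt hgInt measurableSet_Ioo hfg
      _ = 4 * Real.log (1 + Real.sqrt M) / M := hgVal'

private lemma ellipticB_bounds {M : ℝ} (hM : (1/2 : ℝ) ≤ M) :
    1 / (2 * M + 1) ≤ ellipticB M ∧ ellipticB M ≤ 3 / M := by
  have hM0 : (0:ℝ) < M := by linarith
  set f : ℝ → ℝ := fun t => 1 / Real.sqrt ((t ^ 2 - M ^ 2) * ((M + 1) ^ 2 - t ^ 2)) with hf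
  set g : ℝ → ℝ := fun t =>
    Real.sqrt 2 / (2 * M) * (1 / Real.sqrt (t - M) + 1 / Real.sqrt (M + 1 - t)) with hg
  have hMM : M ≤ M + 1 := by linarith
  have hgderiv : ∀ x ∈ Ioo M (M + 1),
      HasDerivAt (fun t => Real.sqrt 2 / (2 * M) *
        (2 * Real.sqrt (t - M) - 2 * Real.sqrt (M + 1 - t))) (g x) x := by
    intro x hx
    obtain ⟨hx1, hx2⟩ := hx
    have ha : (0:ℝ) < x - M := by linarith
    have hb : (0:ℝ) < M + 1 - x := by linarith
    have hsa : (0:ℝ) < Real.sqrt (x - M) := Real.sqrt_pos.2 ha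
    have hsb : (0:ℝ) < Real.sqrt (M + 1 - x) := Real.sqrt_pos.2 hb
    have d1 : HasDerivAt (fun t : ℝ => Real.sqrt (t - M)) (1 / (2 * Real.sqrt (x - M))) x :=
      ((hasDerivAt_id x).sub_const M).sqrt ha.ne'
    have d2 : HasDerivAt (fun t : ℝ => Real.sqrt (M + 1 - t)) (-1 / (2 * Real.sqrt (M + 1 - x))) x := by
      have : HasDerivAt (fun t : ℝ => M + 1 - t) (-1) x := by
        simpa using (hasDerivAt_id x).const_sub (M + 1)
      exact this.sqrt hb.ne'
    have d3 := ((d1.const_mul 2).sub (d2.const_mul 2)).const_mul (Real.sqrt 2 / (2 * M))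
    convert d3 using 1
    · rfl
    · rfl
    · rfl
    rw [hg]
    field_simp
    ring
  have hgpos : ∀ x ∈ Ioo M (M + 1), 0 ≤ g x := by
    intro x hx; rw [hg]; positivity
  have hgcont : ContinuousOn (fun t => Real.sqrt 2 / (2 * M) *
      (2 * Real.sqrt (t - M) - 2 * Real.sqrt (M + 1 - t))) (Icc M (M + 1)) := by
    apply Continuous.continuousOn
    continuity
  obtain ⟨hgInt, hgVal⟩ := ftc_open hMM hgcont hgderiv hgpos
  have hgVal' : ∫ x in Ioo M (M + 1), g x = 2 * Real.sqrt 2 / M := by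
    rw [hgVal, show M + 1 - M = 1 by ring, show M + 1 - (M + 1) = 0 by ring, sub_self,
      Real.sqrt_one, Real.sqrt_zero]
    ring
  have hfg : ∀ x ∈ Ioo M (M + 1), f x ≤ g x := by
    intro x hx
    obtain ⟨hx1, hx2⟩ := hx
    have ha : (0:ℝ) < x - M := by linarith
    have hb : (0:ℝ) < M + 1 - x := by linarith
    have hsa : (0:ℝ) < Real.sqrt (x - M) := Real.sqrt_pos.2 ha
    have hsb : (0:ℝ) < Real.sqrt (M + 1 - x) := Real.sqrt_pos.2 hb
    -- sqrt(prod) ≥ 2M√a√b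
    have c1 : 2 * M * (x - M) ≤ x ^ 2 - M ^ 2 := by nlinarith [sq_nonneg (x - M)]
    have c2 : 2 * M * (M + 1 - x) ≤ (M + 1) ^ 2 - x ^ 2 := by
      nlinarith [mul_nonneg hb.le (show (0:ℝ) ≤ x - M + 1 by linarith)]
    have cpos1 : (0:ℝ) < x ^ 2 - M ^ 2 := by nlinarith
    have key : 2 * M * (Real.sqrt (x - M) * Real.sqrt (M + 1 - x))
        ≤ Real.sqrt ((x ^ 2 - M ^ 2) * ((M + 1) ^ 2 - x ^ 2)) := by
      have e1 : (2 * M * (x - M)) * (2 * M * (M + 1 - x))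
          ≤ (x ^ 2 - M ^ 2) * ((M + 1) ^ 2 - x ^ 2) :=
        mul_le_mul c1 c2 (by positivity) cpos1.le
      have e2 : Real.sqrt ((2 * M * (x - M)) * (2 * M * (M + 1 - x)))
          = 2 * M * (Real.sqrt (x - M) * Real.sqrt (M + 1 - x)) := by
        rw [show (2 * M * (x - M)) * (2 * M * (M + 1 - x))
            = (2 * M) ^ 2 * ((x - M) * (M + 1 - x)) by ring,
          Real.sqrt_mul (sq_nonneg _), Real.sqrt_sq (by positivity),
          Real.sqrt_mul ha.le]
      rw [← e2]
      exact Real.sqrt_le_sqrt e1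
    have hbound : f x ≤ 1 / (2 * M * (Real.sqrt (x - M) * Real.sqrt (M + 1 - x))) :=
      one_div_le_one_div_of_le (by positivity) key
    have habsum : (x - M) + (M + 1 - x) = 1 := by ring
    rcases le_total (x - M) (M + 1 - x) with hcase | hcase
    · have hv : (1:ℝ)/2 ≤ M + 1 - x := by linarith
      have := aux_half hM0 ha hv
      have hterm : Real.sqrt 2 / (2 * M) * (1 / Real.sqrt (x - M)) ≤ g x := by
        rw [hg]
        have : (0:ℝ) ≤ Real.sqrt 2 / (2 * M) * (1 / Real.sqrt (M + 1 - x)) := by positivity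
        nlinarith [this]
      calc f x ≤ 1 / (2 * M * (Real.sqrt (x - M) * Real.sqrt (M + 1 - x))) := hbound
        _ ≤ Real.sqrt 2 / (2 * M) * (1 / Real.sqrt (x - M)) := this
        _ ≤ g x := hterm
    · have hv : (1:ℝ)/2 ≤ x - M := by linarith
      have h' := aux_half hM0 hb hv
      have hterm : Real.sqrt 2 / (2 * M) * (1 / Real.sqrt (M + 1 - x)) ≤ g x := by
        rw [hg]
        have : (0:ℝ) ≤ Real.sqrt 2 / (2 * M) * (1 / Real.sqrt (x - M)) := by positivity
        nlinarith [this]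
      calc f x ≤ 1 / (2 * M * (Real.sqrt (x - M) * Real.sqrt (M + 1 - x))) := hbound
        _ = 1 / (2 * M * (Real.sqrt (M + 1 - x) * Real.sqrt (x - M))) := by rw [mul_comm (Real.sqrt (x - M))]
        _ ≤ Real.sqrt 2 / (2 * M) * (1 / Real.sqrt (M + 1 - x)) := h'
        _ ≤ g x := hterm
  have hfcont : ContinuousOn f (Ioo M (M + 1)) := by
    apply ContinuousOn.div continuousOn_const
    · exact (Real.continuous_sqrt.comp (by continuity)).continuousOn
    · intro x hx
      obtain ⟨hx1, hx2⟩ := hx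
      have : (0:ℝ) < (x ^ 2 - M ^ 2) * ((M + 1) ^ 2 - x ^ 2) := by
        nlinarith [mul_pos (show (0:ℝ) < x - M by linarith) (show (0:ℝ) < x + M by linarith),
          mul_pos (show (0:ℝ) < M + 1 - x by linarith) (show (0:ℝ) < M + 1 + x by linarith)]
      exact (Real.sqrt_pos.2 this).ne'
  have hfnonneg : ∀ x, 0 ≤ f x := fun x => by rw [hf]; positivity
  have hfInt : IntegrableOn f (Ioo M (M + 1)) := by
    apply hgInt.mono' (hfcont.aestronglyMeasurable measurableSet_Ioo)
    refine (ae_restrict_iff' measurableSet_Ioo).2 (Filter.Eventually.of_forall fun x hx => ?_)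
    rw [Real.norm_of_nonneg (hfnonneg x)]
    exact hfg x hx
  constructor
  · -- lower bound
    have hconst : ∀ x ∈ Ioo M (M + 1), 1 / (2 * M + 1) ≤ f x := by
      intro x hx
      obtain ⟨hx1, hx2⟩ := hx
      have hp : (0:ℝ) < (x ^ 2 - M ^ 2) * ((M + 1) ^ 2 - x ^ 2) := by
        nlinarith [mul_pos (show (0:ℝ) < x - M by linarith) (show (0:ℝ) < x + M by linarith),
          mul_pos (show (0:ℝ) < M + 1 - x by linarith) (show (0:ℝ) < M + 1 + x by linarith)]
      have c1 : x ^ 2 - M ^ 2 ≤ 2 * M + 1 := by nlinarith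
      have c2 : (M + 1) ^ 2 - x ^ 2 ≤ 2 * M + 1 := by nlinarith
      have key : Real.sqrt ((x ^ 2 - M ^ 2) * ((M + 1) ^ 2 - x ^ 2)) ≤ 2 * M + 1 := by
        have e1 : (x ^ 2 - M ^ 2) * ((M + 1) ^ 2 - x ^ 2) ≤ (2 * M + 1) ^ 2 := by
          have := mul_le_mul c1 c2 (by nlinarith) (by linarith)
          nlinarith [this]
        have := Real.sqrt_le_sqrt e1
        rwa [Real.sqrt_sq (by linarith)] at this
      exact one_div_le_one_div_of_le (Real.sqrt_pos.2 hp) key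
    have hCInt : IntegrableOn (fun _ : ℝ => 1 / (2 * M + 1)) (Ioo M (M + 1)) := by
      apply integrableOn_const
      · rw [Real.volume_Ioo]
        exact ENNReal.ofReal_ne_top
      · exact enorm_ne_top
    calc 1 / (2 * M + 1) = ∫ _ in Ioo M (M + 1), 1 / (2 * M + 1) := by
          rw [setIntegral_const, Real.volume_real_Ioo_of_le hMM, show M + 1 - M = 1 by ring]
          simp
      _ ≤ ∫ x in Ioo M (M + 1), f x := setIntegral_mono_on hCInt hfInt measurableSet_Ioo hconst
      _ = ellipticB M := rfl
  · have h223 : 2 * Real.sqrt 2 ≤ 3 := by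
      nlinarith [Real.sq_sqrt (show (0:ℝ) ≤ 2 by norm_num), Real.sqrt_nonneg 2]
    calc ellipticB M = ∫ x in Ioo M (M + 1), f x := rfl
      _ ≤ ∫ x in Ioo M (M + 1), g x := setIntegral_mono_on hfInt hgInt measurableSet_Ioo hfg
      _ = 2 * Real.sqrt 2 / M := hgVal'
      _ ≤ 3 / M := by gcongr

end Aux

/-- There are positive constants `c`, `C` independent of `M` such that for all `M ≥ 1/2`
the extremal length `A(M)/B(M)` of the rectangle associated with the elliptic integral
satisfies `c·log(1+M) ≤ A(M)/B(M) ≤ C·log(1+M)`. -/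
theorem elliptic_extremal_length_log_bounds :
    ∃ c C : ℝ, 0 < c ∧ 0 < C ∧
      ∀ M : ℝ, 1 / 2 ≤ M →
        c * Real.log (1 + M) ≤ ellipticA M / ellipticB M ∧
        ellipticA M / ellipticB M ≤ C * Real.log (1 + M) := by
  refine ⟨1/18, 40, by norm_num, by norm_num, fun M hM => ?_⟩
  have hM0 : (0:ℝ) < M := by linarith
  obtain ⟨hA1, hA2⟩ := ellipticA_bounds hM
  obtain ⟨hB1, hB2⟩ := ellipticB_bounds hM
  set L := Real.log (1 + M) with hLdef
  set l := Real.log (1 + Real.sqrt M) with hldef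
  have hL32 : Real.log (3/2) ≤ L := by
    rw [hLdef]
    apply Real.log_le_log (by norm_num)
    linarith
  have hL0 : (0:ℝ) ≤ L := le_trans (Real.log_nonneg (by norm_num)) hL32
  have hl0 : (0:ℝ) ≤ l := Real.log_nonneg (by nlinarith [Real.sqrt_nonneg M])
  have hBpos : (0:ℝ) < ellipticB M := lt_of_lt_of_le (by positivity) hB1
  have hA0 : (0:ℝ) ≤ ellipticA M := le_trans (by positivity) hA1
  constructor
  · -- lower bound
    have low : L / (2 * (M + 1)) / (3 / M) ≤ ellipticA M / ellipticB M :=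
      div_le_div₀ hA0 hA1 hBpos hB2
    have e : L / (2 * (M + 1)) / (3 / M) = L * M / (6 * (M + 1)) := by
      have h1 : M + 1 ≠ 0 := by positivity
      field_simp
      ring
    rw [e] at low
    refine le_trans ?_ low
    rw [le_div_iff₀ (by positivity)]
    nlinarith [mul_nonneg hL0 (show (0:ℝ) ≤ 2 * M - 1 by linarith)]
  · -- upper bound
    have up : ellipticA M / ellipticB M ≤ (4 * l / M) / (1 / (2 * M + 1)) :=
      div_le_div₀ (by positivity) hA2 (by positivity) hB1
    have e : (4 * l / M) / (1 / (2 * M + 1)) = 4 * l * (2 * M + 1) / M := by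
      field_simp
    rw [e] at up
    refine le_trans up ?_
    -- l ≤ log 2 + L/2
    have hsq : (1 + Real.sqrt M) ≤ 2 * Real.sqrt (1 + M) := by
      have s1 : Real.sqrt ((1 + Real.sqrt M) ^ 2) = 1 + Real.sqrt M :=
        Real.sqrt_sq (by positivity)
      have s2 : (1 + Real.sqrt M) ^ 2 ≤ 4 * (1 + M) := by
        nlinarith [sq_nonneg (Real.sqrt M - 1), Real.sq_sqrt hM0.le, Real.sqrt_nonneg M]
      calc 1 + Real.sqrt M = Real.sqrt ((1 + Real.sqrt M) ^ 2) := s1.symm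
        _ ≤ Real.sqrt (4 * (1 + M)) := Real.sqrt_le_sqrt s2
        _ = 2 * Real.sqrt (1 + M) := by
            rw [show (4:ℝ) * (1 + M) = 2 ^ 2 * (1 + M) by norm_num,
              Real.sqrt_mul (by positivity), Real.sqrt_sq (by norm_num)]
    have hl : l ≤ Real.log 2 + (1/2) * L := by
      have hne : Real.sqrt (1 + M) ≠ 0 := by positivity
      calc l ≤ Real.log (2 * Real.sqrt (1 + M)) := by
            rw [hldef]
            apply Real.log_le_log (by positivity) hsq
        _ = Real.log 2 + (1/2) * L := by
            rw [Real.log_mul (by norm_num) hne, Real.log_sqrt (by linarith), hLdef]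
            ring
    have hlog2 : Real.log 2 ≤ 2 * L := by
      have h1 : Real.log 2 ≤ Real.log ((3/2) ^ 2) := by
        apply Real.log_le_log (by norm_num)
        norm_num
      rw [Real.log_pow] at h1
      push_cast at h1
      linarith
    rw [div_le_iff₀ hM0]
    nlinarith [mul_le_mul_of_nonneg_right (show l ≤ 2 * L + (1/2) * L by linarith)
        (show (0:ℝ) ≤ 2 * M + 1 by linarith),
      mul_nonneg hL0 (show (0:ℝ) ≤ 2 * M - 1 by linarith)]
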